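/- Let G be a graph with maximum degree Δ and let 0 < θ < 1/11. Call an edge (u,v) θ-balanced if min{deg(u),deg(v)} ≥ (1−θ)·max{deg(u),deg(v)}, and θ-friend if additionally |N(u) ∩ N(v)| ≥ (1−θ)·min{deg(u),deg(v)}. Call a vertex v θ-dense if at least (1−θ)·deg(v) edges incident to v are θ-friend edges. Let H_θ be the subgraph on θ-dense vertices with the θ-friend edges. Then for any two vertices u, v in the same connected component C of H_θ, we have |N(u) ∩ N(v)| ≥ (1−5θ)·min{deg(u),deg(v)} and min{deg(u),deg(v)} ≥ (1−2θ)·max{deg(u),deg(v)}, where N(·) and deg(·) refer to the original graph G. -/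

import Mathlib

set_option maxHeartbeats 1000000


/-- In the θ-friend/θ-dense decomposition (0 < θ < 1/11), any two
vertices `u v` in the same connected component of `H_θ` satisfy
`|N(u) ∩ N(v)| ≥ (1−5θ)·min{deg u, deg v}` and
`min{deg u, deg v} ≥ (1−2θ)·max{deg u, deg v}`. -/
theorem stmt_0 {V : Type*} [Fintype V] (G : SimpleGraph V) (θ : ℝ)
    (hθ0 : 0 < θ) (hθ1 : θ < 1 / 11)
    (deg : V → ℝ) (hdeg : ∀ v, deg v = ((G.neighborSet v).ncard : ℝ))
    (friend : V → V → Prop)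
    (hfriend : ∀ u v, friend u v ↔ G.Adj u v ∧
        (1 - θ) * max (deg u) (deg v) ≤ min (deg u) (deg v) ∧
        (1 - θ) * min (deg u) (deg v) ≤ ((G.neighborSet u ∩ G.neighborSet v).ncard : ℝ))
    (dens : V → Prop)
    (hdens : ∀ v, dens v ↔ (1 - θ) * deg v ≤ (({u | friend v u}).ncard : ℝ))
    (u v : V) (hu : dens u) (hv : dens v)
    (hreach : Relation.ReflTransGen (fun a b => friend a b ∧ dens a ∧ dens b) u v) :
    (1 - 5 * θ) * min (deg u) (deg v) ≤
        ((G.neighborSet u ∩ G.neighborSet v).ncard : ℝ) ∧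
    (1 - 2 * θ) * max (deg u) (deg v) ≤ min (deg u) (deg v) := by
  classical
  have hθh : (0:ℝ) < 1 - θ := by linarith
  have hθ2 : (0:ℝ) < 1 - 2*θ := by linarith
  have hθ5 : (0:ℝ) < 1 - 5*θ := by linarith
  have hdnn : ∀ a, 0 ≤ deg a := fun a => by rw [hdeg]; positivity
  have hsymm : ∀ a b, friend a b → friend b a := by
    intro a b h
    rw [hfriend] at h ⊢
    obtain ⟨h1, h2, h3⟩ := h
    exact ⟨h1.symm, by rwa [max_comm, min_comm], by rwa [min_comm, Set.inter_comm]⟩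
  have hadj_deg : ∀ a b : V, G.Adj a b → (1:ℝ) ≤ deg a := by
    intro a b h
    rw [hdeg]
    have : 0 < (G.neighborSet a).ncard := (Set.ncard_pos (Set.toFinite _)).mpr ⟨b, h⟩
    exact_mod_cast this
  -- triangle inequality for common neighborhoods
  have tri : ∀ a b c : V,
      ((G.neighborSet a ∩ G.neighborSet b).ncard : ℝ)
        + ((G.neighborSet b ∩ G.neighborSet c).ncard : ℝ) - deg b
        ≤ ((G.neighborSet a ∩ G.neighborSet c).ncard : ℝ) := by
    intro a b c
    have h1 : (G.neighborSet a ∩ G.neighborSet b)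
        ⊆ (G.neighborSet a ∩ G.neighborSet c) ∪ (G.neighborSet b \ G.neighborSet c) := by
      intro y hy
      by_cases hc : y ∈ G.neighborSet c
      · exact Or.inl ⟨hy.1, hc⟩
      · exact Or.inr ⟨hy.2, hc⟩
    have h2 : (G.neighborSet a ∩ G.neighborSet b).ncard
        ≤ (G.neighborSet a ∩ G.neighborSet c).ncard + (G.neighborSet b \ G.neighborSet c).ncard :=
      (Set.ncard_le_ncard h1 (Set.toFinite _)).trans (Set.ncard_union_le _ _)
    have h3 : (G.neighborSet b ∩ G.neighborSet c).ncard
        + (G.neighborSet b \ G.neighborSet c).ncard = (G.neighborSet b).ncard :=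
      Set.ncard_inter_add_ncard_diff_eq_ncard _ _
    rw [hdeg]
    have h2' : ((G.neighborSet a ∩ G.neighborSet b).ncard : ℝ)
        ≤ (G.neighborSet a ∩ G.neighborSet c).ncard + (G.neighborSet b \ G.neighborSet c).ncard := by
      exact_mod_cast h2
    have h3' : ((G.neighborSet b ∩ G.neighborSet c).ncard : ℝ)
        + (G.neighborSet b \ G.neighborSet c).ncard = (G.neighborSet b).ncard := by
      exact_mod_cast h3
    linarith
  -- Lemma B : if a-x and x-b are friend edges, the conclusion holds for (a,b)
  have lemB : ∀ a x b : V, friend a x → friend x b →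
      (1 - 5 * θ) * min (deg a) (deg b) ≤ ((G.neighborSet a ∩ G.neighborSet b).ncard : ℝ) ∧
      (1 - 2 * θ) * max (deg a) (deg b) ≤ min (deg a) (deg b) := by
    intro a x b hax hxb
    rw [hfriend] at hax hxb
    obtain ⟨hadj1, hb1, hn1⟩ := hax
    obtain ⟨hadj2, hb2, hn2⟩ := hxb
    have hax1 : (1-θ) * deg a ≤ deg x :=
      le_trans (mul_le_mul_of_nonneg_left (le_max_left _ _) hθh.le)
        (le_trans hb1 (min_le_right _ _))
    have hxa : (1-θ) * deg x ≤ deg a :=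
      le_trans (mul_le_mul_of_nonneg_left (le_max_right _ _) hθh.le)
        (le_trans hb1 (min_le_left _ _))
    have hxb1 : (1-θ) * deg x ≤ deg b :=
      le_trans (mul_le_mul_of_nonneg_left (le_max_left _ _) hθh.le)
        (le_trans hb2 (min_le_right _ _))
    have hbx : (1-θ) * deg b ≤ deg x :=
      le_trans (mul_le_mul_of_nonneg_left (le_max_right _ _) hθh.le)
        (le_trans hb2 (min_le_left _ _))
    have hm0 : 0 ≤ min (deg a) (deg b) := le_min (hdnn a) (hdnn b)
    have hma : min (deg a) (deg b) ≤ deg a := min_le_left _ _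
    have hmb : min (deg a) (deg b) ≤ deg b := min_le_right _ _
    have h1 : (1-θ) * min (deg a) (deg b) ≤ min (deg a) (deg x) :=
      le_min (by nlinarith) (by nlinarith)
    have h2 : (1-θ) * min (deg a) (deg b) ≤ min (deg x) (deg b) :=
      le_min (by nlinarith) (by nlinarith)
    have hxm : (1-θ) * deg x ≤ min (deg a) (deg b) := le_min hxa hxb1
    have htri := tri a x b
    have hn1' : (1-θ) * ((1-θ) * min (deg a) (deg b))
        ≤ ((G.neighborSet a ∩ G.neighborSet x).ncard : ℝ) :=
      le_trans (mul_le_mul_of_nonneg_left h1 hθh.le) hn1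
    have hn2' : (1-θ) * ((1-θ) * min (deg a) (deg b))
        ≤ ((G.neighborSet x ∩ G.neighborSet b).ncard : ℝ) :=
      le_trans (mul_le_mul_of_nonneg_left h2 hθh.le) hn2
    constructor
    · have c1 := mul_le_mul_of_nonneg_left hn1' hθh.le
      have c2 := mul_le_mul_of_nonneg_left hn2' hθh.le
      have c3 := mul_le_mul_of_nonneg_left htri hθh.le
      have c4 : 0 ≤ θ^2*(1-2*θ)*min (deg a) (deg b) :=
        mul_nonneg (mul_nonneg (sq_nonneg θ) hθ2.le) hm0
      have goal' : (1-θ) * ((1-5*θ) * min (deg a) (deg b))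
          ≤ (1-θ) * ((G.neighborSet a ∩ G.neighborSet b).ncard : ℝ) := by
        nlinarith [c1, c2, c3, c4, hxm]

      exact (mul_le_mul_iff_right₀ hθh).mp goal'
    · rcases le_total (deg a) (deg b) with h | h
      · rw [max_eq_right h, min_eq_left h]
        linarith [mul_le_mul_of_nonneg_left hbx hθh.le, hxa,
          mul_nonneg (sq_nonneg θ) (hdnn b)]
      · rw [max_eq_left h, min_eq_right h]
        linarith [mul_le_mul_of_nonneg_left hax1 hθh.le, hxb1,
          mul_nonneg (sq_nonneg θ) (hdnn a)]
  clear hv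
  induction hreach with
  | refl =>
      constructor
      · rw [min_self, Set.inter_self, ← hdeg]
        nlinarith [hdnn u]
      · rw [min_self, max_self]
        nlinarith [hdnn u]
  | @tail w v hreach' hstep ih =>
      obtain ⟨hfwv, hdw, hdv⟩ := hstep
      obtain ⟨ihn, ihd⟩ := ih
      have hfwv' := hfwv
      rw [hfriend] at hfwv'
      obtain ⟨hadjwv, hbwv, hnwv⟩ := hfwv'
      have h1 : (1-2*θ) * deg u ≤ deg w :=
        le_trans (mul_le_mul_of_nonneg_left (le_max_left _ _) hθ2.le)
          (le_trans ihd (min_le_right _ _))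
      have h2 : (1-2*θ) * deg w ≤ deg u :=
        le_trans (mul_le_mul_of_nonneg_left (le_max_right _ _) hθ2.le)
          (le_trans ihd (min_le_left _ _))
      have h4 : (1-θ) * deg w ≤ deg v :=
        le_trans (mul_le_mul_of_nonneg_left (le_max_left _ _) hθh.le)
          (le_trans hbwv (min_le_right _ _))
      have h5 : (1-θ) * deg v ≤ deg w :=
        le_trans (mul_le_mul_of_nonneg_left (le_max_right _ _) hθh.le)
          (le_trans hbwv (min_le_left _ _))
      have hbw : (1:ℝ) ≤ deg w := hadj_deg w v hadjwv
      -- counting: friend-neighbourhoods of u and v intersect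
      set Fu : Set V := {y | friend u y} with hFu
      set Fv : Set V := {y | friend v y} with hFv
      have hFuN : Fu ⊆ G.neighborSet u := fun y hy => ((hfriend u y).mp hy).1
      have hFvN : Fv ⊆ G.neighborSet v := fun y hy => ((hfriend v y).mp hy).1
      have hsub : G.neighborSet u ∩ G.neighborSet v
          ⊆ (Fu ∩ Fv) ∪ ((G.neighborSet u \ Fu) ∪ (G.neighborSet v \ Fv)) := by
        intro y hy
        by_cases hy1 : y ∈ Fu
        · by_cases hy2 : y ∈ Fv
          · exact Or.inl ⟨hy1, hy2⟩
          · exact Or.inr (Or.inr ⟨hy.2, hy2⟩)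
        · exact Or.inr (Or.inl ⟨hy.1, hy1⟩)
      have hcard1 : ((G.neighborSet u ∩ G.neighborSet v).ncard : ℝ)
          ≤ ((Fu ∩ Fv).ncard : ℝ) + (((G.neighborSet u \ Fu).ncard : ℝ)
            + ((G.neighborSet v \ Fv).ncard : ℝ)) := by
        have := (Set.ncard_le_ncard hsub (Set.toFinite _)).trans
          ((Set.ncard_union_le _ _).trans
            (by exact Nat.add_le_add_left (Set.ncard_union_le _ _) _))
        exact_mod_cast this
      have hdiffu : ((G.neighborSet u \ Fu).ncard : ℝ) ≤ θ * deg u := by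
        have hc : (G.neighborSet u \ Fu).ncard + Fu.ncard = (G.neighborSet u).ncard :=
          Set.ncard_diff_add_ncard_of_subset hFuN (Set.toFinite _)
        have hc' : ((G.neighborSet u \ Fu).ncard : ℝ) + (Fu.ncard : ℝ)
            = ((G.neighborSet u).ncard : ℝ) := by exact_mod_cast hc
        rw [← hdeg] at hc'
        have hd' : (1 - θ) * deg u ≤ (Fu.ncard : ℝ) := (hdens u).mp hu
        linarith
      have hdiffv : ((G.neighborSet v \ Fv).ncard : ℝ) ≤ θ * deg v := by
        have hc : (G.neighborSet v \ Fv).ncard + Fv.ncard = (G.neighborSet v).ncard :=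
          Set.ncard_diff_add_ncard_of_subset hFvN (Set.toFinite _)
        have hc' : ((G.neighborSet v \ Fv).ncard : ℝ) + (Fv.ncard : ℝ)
            = ((G.neighborSet v).ncard : ℝ) := by exact_mod_cast hc
        rw [← hdeg] at hc'
        have hd' : (1 - θ) * deg v ≤ (Fv.ncard : ℝ) := (hdens v).mp hdv
        linarith
      -- lower bounds on common neighbourhoods
      have hminb : (1-2*θ) * deg w ≤ min (deg u) (deg w) :=
        le_min h2 (by nlinarith [hdnn w])
      have h3' : (1-5*θ) * ((1-2*θ) * deg w)
          ≤ ((G.neighborSet u ∩ G.neighborSet w).ncard : ℝ) :=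
        le_trans (mul_le_mul_of_nonneg_left hminb hθ5.le) ihn
      have hminc : (1-θ) * deg w ≤ min (deg w) (deg v) :=
        le_min (by nlinarith [hdnn w]) h4
      have h6' : (1-θ) * ((1-θ) * deg w)
          ≤ ((G.neighborSet w ∩ G.neighborSet v).ncard : ℝ) :=
        le_trans (mul_le_mul_of_nonneg_left hminc hθh.le) hnwv
      have htri := tri u w v
      have ha' : deg u ≤ (11/9) * deg w := by
        nlinarith [hdnn u, h1, mul_nonneg (by linarith : (0:ℝ) ≤ 1/11 - θ) (hdnn u)]
      have hc' : deg v ≤ (11/10) * deg w := by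
        nlinarith [hdnn v, h5, mul_nonneg (by linarith : (0:ℝ) ≤ 1/11 - θ) (hdnn v)]
      have hθa : θ * deg u ≤ θ * ((11/9) * deg w) :=
        mul_le_mul_of_nonneg_left ha' hθ0.le
      have hθc : θ * deg v ≤ θ * ((11/10) * deg w) :=
        mul_le_mul_of_nonneg_left hc' hθ0.le
      have key : (0:ℝ) < 1 - (1019/90)*θ + 11*θ^2 := by
        nlinarith [sq_nonneg (θ - 1/11)]
      have hqb : (1 - (1019/90)*θ + 11*θ^2) ≤ (1 - (1019/90)*θ + 11*θ^2) * deg w :=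
        le_mul_of_one_le_right key.le hbw
      have hpos : (0:ℝ) < ((Fu ∩ Fv).ncard : ℝ) := by
        linarith [hcard1, hdiffu, hdiffv, htri, h3', h6', hθa, hθc, hqb, key]
      have hne : (Fu ∩ Fv).Nonempty := by
        apply Set.nonempty_of_ncard_ne_zero
        intro h
        rw [h] at hpos
        simp at hpos
      obtain ⟨x, hxu, hxv⟩ := hne
      exact lemB u x v hxu (hsymm v x hxv)
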